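/- Let n ≥ 1 and let φ : ℝ → (0,∞) be a solution of φ^{n-1} φ' e^φ = e^{nt} with φ(t) → 0 as t → -∞. Then lim_{t→∞} φ(t)/t = n and lim_{t→∞} φ'(t) = n. -/

import Mathlib

open Filter Real intervalIntegral

noncomputable def solF (n : ℕ) (x : ℝ) : ℝ := ∫ s in (0:ℝ)..x, s ^ (n - 1) * Real.exp s

lemma solF_cont (n : ℕ) : Continuous fun s : ℝ => s ^ (n - 1) * Real.exp s := by fun_prop

lemma solF_hasDerivAt (n : ℕ) (x : ℝ) :
    HasDerivAt (solF n) (x ^ (n - 1) * Real.exp x) x := by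
  exact intervalIntegral.integral_hasDerivAt_right
    ((solF_cont n).intervalIntegrable _ _)
    ((solF_cont n).stronglyMeasurableAtFilter _ _)
    (solF_cont n).continuousAt

lemma solF_zero (n : ℕ) : solF n 0 = 0 := intervalIntegral.integral_same

lemma solF_mono (n : ℕ) {a b : ℝ} (ha : 0 ≤ a) (hab : a ≤ b) : solF n a ≤ solF n b := by
  have h := intervalIntegral.integral_add_adjacent_intervals (μ := MeasureTheory.volume)
    (a := (0:ℝ)) (b := a) (c := b)
    ((solF_cont n).intervalIntegrable _ _) ((solF_cont n).intervalIntegrable _ _)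
  have hnn : 0 ≤ ∫ s in a..b, s ^ (n-1) * Real.exp s := by
    apply intervalIntegral.integral_nonneg hab
    intro u hu
    exact mul_nonneg (pow_nonneg (ha.trans hu.1) _) (Real.exp_pos u).le
  have : solF n b = solF n a + ∫ s in a..b, s ^ (n-1) * Real.exp s := (h.symm : _)
  linarith

lemma solF_le (n : ℕ) {x : ℝ} (hx : 0 ≤ x) : solF n x ≤ x ^ (n-1) * Real.exp x := by
  have h1 : solF n x ≤ ∫ s in (0:ℝ)..x, x ^ (n-1) * Real.exp s := by
    apply intervalIntegral.integral_mono_on hx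
      ((solF_cont n).intervalIntegrable _ _) ((by fun_prop : Continuous fun s : ℝ => _ * Real.exp s).intervalIntegrable _ _)
    intro s hs
    exact mul_le_mul_of_nonneg_right (pow_le_pow_left₀ hs.1 hs.2 _) (Real.exp_pos s).le
  have h2 : ∫ s in (0:ℝ)..x, x ^ (n-1) * Real.exp s = x^(n-1) * (Real.exp x - 1) := by
    rw [intervalIntegral.integral_const_mul, integral_exp, Real.exp_zero]
  nlinarith [pow_nonneg hx (n-1), Real.exp_pos x]

lemma solF_lower (n : ℕ) {δ x : ℝ} (hδ0 : 0 < δ) (hδ1 : δ < 1) (hx : 0 < x) :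
    (1 - δ) ^ (n-1) * (1 - Real.exp (-(δ * x))) * (x ^ (n-1) * Real.exp x) ≤ solF n x := by
  set a := (1 - δ) * x with ha
  have ha0 : 0 ≤ a := mul_nonneg (by linarith) hx.le
  have hax : a ≤ x := by nlinarith
  have hsplit := intervalIntegral.integral_add_adjacent_intervals (μ := MeasureTheory.volume)
    (a := (0:ℝ)) (b := a) (c := x)
    ((solF_cont n).intervalIntegrable _ _) ((solF_cont n).intervalIntegrable _ _)
  have h1 : 0 ≤ ∫ s in (0:ℝ)..a, s ^ (n-1) * Real.exp s := by
    apply intervalIntegral.integral_nonneg ha0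
    intro u hu
    exact mul_nonneg (pow_nonneg hu.1 _) (Real.exp_pos u).le
  have h2 : ∫ s in a..x, a ^ (n-1) * Real.exp s ≤ ∫ s in a..x, s ^ (n-1) * Real.exp s := by
    apply intervalIntegral.integral_mono_on hax ((by fun_prop : Continuous fun s : ℝ => _ * Real.exp s).intervalIntegrable _ _)
      ((solF_cont n).intervalIntegrable _ _)
    intro s hs
    exact mul_le_mul_of_nonneg_right (pow_le_pow_left₀ ha0 hs.1 _) (Real.exp_pos s).le
  have h3 : ∫ s in a..x, a ^ (n-1) * Real.exp s = a^(n-1) * (Real.exp x - Real.exp a) := by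
    rw [intervalIntegral.integral_const_mul, integral_exp]
  have key : a^(n-1) * (Real.exp x - Real.exp a) ≤ solF n x := by
    have : solF n x = (∫ s in (0:ℝ)..a, s ^ (n-1) * Real.exp s)
        + ∫ s in a..x, s ^ (n-1) * Real.exp s := (hsplit.symm : _)
    rw [this, ← h3]; linarith
  refine le_trans (le_of_eq ?_) key
  have hea : Real.exp a = Real.exp x * Real.exp (-(δ * x)) := by
    rw [← Real.exp_add, ha]; ring_nf
  rw [mul_pow, hea]; ring

lemma solR_tendsto (n : ℕ) :
    Tendsto (fun x => solF n x / (x ^ (n-1) * Real.exp x)) atTop (nhds 1) := by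
  have key : ∀ ε > (0:ℝ), ∀ᶠ x in atTop,
      1 - ε ≤ solF n x / (x ^ (n-1) * Real.exp x) ∧
      solF n x / (x ^ (n-1) * Real.exp x) ≤ 1 := by
    intro ε hε
    set δ : ℝ := min (ε / (2 * (n+1))) (1/2) with hδdef
    have hδ0 : 0 < δ := lt_min (by positivity) (by norm_num)
    have hδ1 : δ < 1 := lt_of_le_of_lt (min_le_right _ _) (by norm_num)
    have hexp : Tendsto (fun x : ℝ => Real.exp (-(δ * x))) atTop (nhds 0) := by
      apply Real.tendsto_exp_atBot.comp
      exact tendsto_neg_atTop_atBot.comp ((tendsto_const_mul_atTop_of_pos hδ0).mpr tendsto_id)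
    have hev : ∀ᶠ x : ℝ in atTop, Real.exp (-(δ * x)) < ε/2 :=
      hexp.eventually_lt_const (by positivity)
    filter_upwards [hev, eventually_gt_atTop (0:ℝ)] with x hx1 hx0
    have hd : 0 < x ^ (n-1) * Real.exp x := by positivity
    constructor
    · rw [le_div_iff₀ hd]
      refine le_trans ?_ (solF_lower n hδ0 hδ1 hx0)
      apply mul_le_mul_of_nonneg_right _ hd.le
      have hA : (1:ℝ) - ε/2 ≤ (1 - δ) ^ (n-1) := by
        have := one_add_mul_le_pow (a := -δ) (by linarith) (n-1)
        rw [(by ring : (1:ℝ) + -δ = 1 - δ)] at this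
        have hle : ((n:ℝ)-1) * δ ≤ ε/2 := by
          have h1 : δ ≤ ε / (2 * (n+1)) := min_le_left _ _
          have h2 : ((n:ℝ)-1) ≤ n+1 := by push_cast; linarith
          have h3 : (0:ℝ) < 2*(n+1) := by positivity
          rw [le_div_iff₀ h3] at h1
          nlinarith [hδ0.le, (by push_cast; positivity : (0:ℝ) ≤ (n:ℝ)+1)]
        have hcast : ((n-1 : ℕ) : ℝ) ≤ (n:ℝ) - 1 ∨ ((n-1:ℕ):ℝ) = (n:ℝ)-1 ∨ n = 0 := by
          rcases Nat.eq_zero_or_pos n with h | h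
          · exact Or.inr (Or.inr h)
          · right; left; push_cast [Nat.cast_sub h]; ring
        rcases hcast with h | h | h
        · nlinarith [hδ0.le]
        · rw [h] at this; nlinarith
        · subst h; simp at this ⊢; nlinarith [hδ0.le]
      have hA0 : (0:ℝ) ≤ (1 - δ) ^ (n-1) := pow_nonneg (by linarith) _
      have hA1 : (1 - δ) ^ (n-1) ≤ 1 := pow_le_one₀ (by linarith) (by linarith)
      have hB : (1:ℝ) - ε/2 ≤ 1 - Real.exp (-(δ * x)) := by linarith
      have hB0 : (0:ℝ) ≤ 1 - Real.exp (-(δ*x)) := by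
        have : Real.exp (-(δ*x)) ≤ 1 := by
          rw [Real.exp_le_one_iff]; nlinarith
        linarith
      have hB1 : 1 - Real.exp (-(δ*x)) ≤ 1 := by nlinarith [Real.exp_pos (-(δ*x))]
      nlinarith
    · rw [div_le_one hd]
      exact solF_le n hx0.le
  rw [Metric.tendsto_nhds]
  intro ε hε
  filter_upwards [key (ε/2) (by positivity)] with x hx
  rw [Real.dist_eq, abs_lt]
  constructor <;> linarith [hx.1, hx.2]


/-- If `φ : ℝ → (0,∞)` is a differentiable solution of
`φ^{n-1} φ' e^φ = e^{nt}` with `φ → 0` as `t → -∞`, then `φ(t)/t → n` and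
`φ'(t) → n` as `t → ∞`. -/
theorem stmt_3 (n : ℕ) (hn : 1 ≤ n) (φ : ℝ → ℝ)
    (hpos : ∀ t, 0 < φ t) (hdiff : Differentiable ℝ φ)
    (hode : ∀ t : ℝ, φ t ^ (n - 1) * deriv φ t * Real.exp (φ t) = Real.exp (n * t))
    (hlim : Tendsto φ atBot (nhds 0)) :
    Tendsto (fun t => φ t / t) atTop (nhds (n : ℝ)) ∧
      Tendsto (deriv φ) atTop (nhds (n : ℝ)) := by
  have hn0 : (0:ℝ) < n := by exact_mod_cast hn
  have hFd : ∀ t : ℝ, HasDerivAt (fun t => solF n (φ t)) (Real.exp (n * t)) t := by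
    intro t
    have h := (solF_hasDerivAt n (φ t)).comp t (hdiff t).hasDerivAt
    refine h.congr_deriv ?_
    rw [← hode t]; ring
  have hGd : ∀ t : ℝ, HasDerivAt (fun t : ℝ => Real.exp (n*t)/n) (Real.exp (n*t)) t := by
    intro t
    have h := ((Real.hasDerivAt_exp ((n:ℝ)*t)).comp t
      ((hasDerivAt_id t).const_mul (n:ℝ))).div_const (n:ℝ)
    refine h.congr_deriv ?_
    field_simp
  have hconst : ∀ t s : ℝ, solF n (φ t) - Real.exp (n*t)/n = solF n (φ s) - Real.exp (n*s)/n := by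
    intro t s
    apply is_const_of_deriv_eq_zero (f := fun t : ℝ => solF n (φ t) - Real.exp (n*t)/n)
    · intro x; exact ((hFd x).sub (hGd x)).differentiableAt
    · intro x; rw [show (fun t : ℝ => solF n (φ t) - Real.exp (n*t)/n) = (fun t => solF n (φ t)) - (fun t => Real.exp (n*t)/n) from rfl, ((hFd x).sub (hGd x)).deriv]; ring
  have hkey : ∀ t : ℝ, solF n (φ t) = Real.exp (n*t)/n := by
    intro t
    have hlim2 : Tendsto (fun s : ℝ => solF n (φ s) - Real.exp (n*s)/n) atBot (nhds 0) := by
      have h1 : Tendsto (fun s => solF n (φ s)) atBot (nhds 0) := by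
        have := ((solF_hasDerivAt n 0).differentiableAt.continuousAt.tendsto).comp hlim
        simpa [Function.comp_def, solF_zero] using this
      have h2 : Tendsto (fun s : ℝ => Real.exp ((n:ℝ)*s)/n) atBot (nhds 0) := by
        have h3 : Tendsto (fun s : ℝ => Real.exp ((n:ℝ)*s)) atBot (nhds 0) :=
          Real.tendsto_exp_atBot.comp ((tendsto_const_mul_atBot_of_pos hn0).mpr tendsto_id)
        simpa using h3.div_const (n:ℝ)
      simpa using h1.sub h2
    have h4 := tendsto_nhds_unique
      ((tendsto_const_nhds (α := ℝ) (f := atBot)).congr (fun s => hconst t s)) hlim2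
    linarith
  have hFpos : ∀ t, 0 < solF n (φ t) := fun t => by rw [hkey t]; positivity
  have htop : Tendsto φ atTop atTop := by
    rw [tendsto_atTop]
    intro b
    have h1 : Tendsto (fun t : ℝ => Real.exp ((n:ℝ)*t)/n) atTop atTop :=
      (Real.tendsto_exp_atTop.comp
        ((tendsto_const_mul_atTop_of_pos hn0).mpr tendsto_id)).atTop_div_const hn0
    filter_upwards [h1.eventually_gt_atTop (solF n (max b 0))] with t ht
    by_contra hb
    push_neg at hb
    have h2 : solF n (φ t) ≤ solF n (max b 0) :=
      solF_mono n (hpos t).le (hb.le.trans (le_max_left _ _))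
    rw [hkey t] at h2
    linarith
  have hg : ∀ t, (0:ℝ) < φ t ^ (n-1) * Real.exp (φ t) := by
    intro t; have := hpos t; positivity
  have hr1 : Tendsto (fun t => solF n (φ t) / (φ t ^ (n-1) * Real.exp (φ t))) atTop (nhds 1) := by
    have := (solR_tendsto n).comp htop
    simpa [Function.comp_def] using this
  have hderiv : ∀ t, deriv φ t =
      (n:ℝ) * (solF n (φ t) / (φ t ^ (n-1) * Real.exp (φ t))) := by
    intro t
    have h2 : φ t ^ (n-1) * Real.exp (φ t) * deriv φ t = (n:ℝ) * solF n (φ t) := by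
      rw [hkey t, mul_div_cancel₀ _ (ne_of_gt hn0), ← hode t]; ring
    rw [mul_div_assoc'] at *
    rw [eq_div_iff (ne_of_gt (hg t))]
    linear_combination h2
  -- second conclusion
  have concl2 : Tendsto (deriv φ) atTop (nhds (n : ℝ)) := by
    have h := hr1.const_mul (n:ℝ)
    rw [mul_one] at h
    exact h.congr (fun t => (hderiv t).symm)
  refine ⟨?_, concl2⟩
  -- log identity
  have hrpos : ∀ t, 0 < solF n (φ t) / (φ t ^ (n-1) * Real.exp (φ t)) :=
    fun t => div_pos (hFpos t) (hg t)
  have hlogid : ∀ t : ℝ, (n:ℝ) * t = Real.log n + ((n-1 : ℕ):ℝ) * Real.log (φ t) + φ t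
      + Real.log (solF n (φ t) / (φ t ^ (n-1) * Real.exp (φ t))) := by
    intro t
    have h1 : Real.exp ((n:ℝ)*t) = (n:ℝ) * (φ t ^ (n-1) * Real.exp (φ t))
        * (solF n (φ t) / (φ t ^ (n-1) * Real.exp (φ t))) := by
      rw [mul_assoc, mul_div_cancel₀ _ (ne_of_gt (hg t)), hkey t,
        mul_div_cancel₀ _ (ne_of_gt hn0)]
    have h2 := congrArg Real.log h1
    rw [Real.log_exp] at h2
    rw [h2, Real.log_mul (ne_of_gt (mul_pos hn0 (hg t))) (ne_of_gt (hrpos t)),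
      Real.log_mul (ne_of_gt hn0) (ne_of_gt (hg t)),
      Real.log_mul (pow_ne_zero _ (ne_of_gt (hpos t))) (Real.exp_ne_zero _),
      Real.log_pow, Real.log_exp]
    ring
  -- eventual bounds
  have hev1 : ∀ᶠ t in atTop, (1:ℝ) ≤ φ t := htop.eventually_ge_atTop 1
  have hev2 : ∀ᶠ t in atTop, (1/2 : ℝ) < solF n (φ t) / (φ t ^ (n-1) * Real.exp (φ t)) :=
    hr1.eventually_const_lt (by norm_num)
  have hlogn : (0:ℝ) ≤ Real.log n := Real.log_nonneg (by exact_mod_cast hn)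
  have hphile : ∀ᶠ t in atTop, φ t ≤ (n:ℝ) * t + 1 := by
    filter_upwards [hev1, hev2] with t h1 h2
    have h3 : (0:ℝ) ≤ ((n-1:ℕ):ℝ) * Real.log (φ t) :=
      mul_nonneg (by positivity) (Real.log_nonneg h1)
    have h4 : (-1:ℝ) ≤ Real.log (solF n (φ t) / (φ t ^ (n-1) * Real.exp (φ t))) := by
      have he : Real.exp (-1) ≤ 1/2 := by
        have h5 : (2:ℝ) ≤ Real.exp 1 := by nlinarith [Real.add_one_le_exp (1:ℝ)]
        rw [Real.exp_neg, inv_eq_one_div, div_le_div_iff₀ (Real.exp_pos 1) (by norm_num)]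
        linarith
      calc (-1:ℝ) = Real.log (Real.exp (-1)) := (Real.log_exp _).symm
        _ ≤ _ := Real.log_le_log (Real.exp_pos _) (he.trans h2.le)
    have := hlogid t
    linarith
  -- log φ / t → 0
  have htlin : Tendsto (fun t : ℝ => (n:ℝ)*t+1) atTop atTop :=
    tendsto_atTop_add_const_right _ 1 ((tendsto_const_mul_atTop_of_pos hn0).mpr tendsto_id)
  have hlogbig : Tendsto (fun t : ℝ => Real.log ((n:ℝ)*t+1) / t) atTop (nhds 0) := by
    have h1 := Real.isLittleO_log_id_atTop.comp_tendsto htlin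
    have h2 : (fun t : ℝ => (n:ℝ)*t+1) =O[atTop] (fun t => t) := by
      apply Asymptotics.IsBigO.of_bound ((n:ℝ)+1)
      filter_upwards [eventually_ge_atTop (1:ℝ)] with t ht
      simp only [Real.norm_eq_abs]
      rw [abs_of_nonneg (by nlinarith), abs_of_nonneg (by linarith)]
      nlinarith
    have h3 := (h1.trans_isBigO h2).tendsto_div_nhds_zero
    simpa [Function.comp] using h3
  have hlogphi : Tendsto (fun t => Real.log (φ t) / t) atTop (nhds 0) := by
    apply tendsto_of_tendsto_of_tendsto_of_le_of_le' tendsto_const_nhds hlogbig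
    · filter_upwards [hev1, eventually_ge_atTop (1:ℝ)] with t h1 ht
      exact div_nonneg (Real.log_nonneg h1) (by linarith)
    · filter_upwards [hev1, hphile, eventually_ge_atTop (1:ℝ)] with t h1 h2 ht
      apply div_le_div_of_nonneg_right ?_ (by linarith)
      exact Real.log_le_log (by linarith) h2
  have hlogr0 : Tendsto (fun t => Real.log (solF n (φ t) / (φ t ^ (n-1) * Real.exp (φ t))))
      atTop (nhds 0) := by
    have := (Real.continuousAt_log one_ne_zero).tendsto.comp hr1
    simpa [Function.comp_def, Real.log_one] using this
  have hbig : Tendsto (fun t => (n:ℝ) - Real.log n * t⁻¹ - ((n-1:ℕ):ℝ) * (Real.log (φ t) / t)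
      - Real.log (solF n (φ t) / (φ t ^ (n-1) * Real.exp (φ t))) * t⁻¹) atTop (nhds (n:ℝ)) := by
    have T1 : Tendsto (fun t : ℝ => Real.log n * t⁻¹) atTop (nhds 0) := by
      simpa using tendsto_inv_atTop_zero.const_mul (Real.log n)
    have T2 : Tendsto (fun t => ((n-1:ℕ):ℝ) * (Real.log (φ t) / t)) atTop (nhds 0) := by
      simpa using hlogphi.const_mul ((n-1:ℕ):ℝ)
    have T3 : Tendsto (fun t => Real.log (solF n (φ t) / (φ t ^ (n-1) * Real.exp (φ t))) * t⁻¹)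
        atTop (nhds 0) := by
      simpa using hlogr0.mul tendsto_inv_atTop_zero
    have := ((tendsto_const_nhds (x := (n:ℝ)) (f := atTop)).sub T1).sub T2 |>.sub T3
    simpa using this
  apply hbig.congr'
  filter_upwards [eventually_ge_atTop (1:ℝ)] with t ht
  have ht0 : t ≠ 0 := by linarith
  have h := hlogid t
  rw [Nat.cast_sub hn] at h
  field_simp
  rw [Nat.cast_sub hn]; linarith [h]
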